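/- Let f : ℝ^m → ℝ be C¹, let α, β ∈ (0,1), δ₀ > 0, and let (x_n) be the backtracking gradient descent sequence from an arbitrary initial point x₀ ∈ ℝ^m. Let A = {x ∈ ℝ^m : ∇f(x) = 0}, let C be the set of cluster points of (x_n), and let B be a compact connected component of A with C ∩ B ≠ ∅. Then C ⊆ B and C is connected; in particular, if B is a single point {p}, then the whole sequence (x_n) converges to p. -/

import Mathlib

open Gradient

/-- Armijo's condition at `x` for step size `δ`:
`f(x − δ∇f(x)) − f(x) ≤ −αδ‖∇f(x)‖²`. -/
def ArmijoCondition {E : Type*} [NormedAddCommGroup E] [InnerProductSpace ℝ E]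
    [CompleteSpace E] (f : E → ℝ) (α δ : ℝ) (x : E) : Prop :=
  f (x - δ • ∇ f x) - f x ≤ -(α * δ * ‖∇ f x‖ ^ 2)

/-- `δsel` is the backtracking learning rate function: `δsel x` is the largest number of the
form `β^j δ₀` (i.e. the one with the smallest exponent `j`) satisfying Armijo's condition
at `x`. -/
def IsBacktrackingRate {E : Type*} [NormedAddCommGroup E] [InnerProductSpace ℝ E]
    [CompleteSpace E] (f : E → ℝ) (α β δ₀ : ℝ) (δsel : E → ℝ) : Prop :=
  ∀ x : E, ∃ j : ℕ, δsel x = β ^ j * δ₀ ∧ ArmijoCondition f α (δsel x) x ∧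
    ∀ i < j, ¬ ArmijoCondition f α (β ^ i * δ₀) x

open Filter Metric Set InnerProductSpace Topology

section Helpers

variable {E : Type*} [NormedAddCommGroup E] [InnerProductSpace ℝ E] [CompleteSpace E]

theorem gradient_continuous {f : E → ℝ} (hf : ContDiff ℝ 1 f) : Continuous (∇ f) :=
  (InnerProductSpace.toDual ℝ E).symm.continuous.comp (hf.continuous_fderiv one_ne_zero)

theorem mvt_bound {f : E → ℝ} (hf : ContDiff ℝ 1 f) (x : E) {δ ε : ℝ} (hδ : 0 ≤ δ) (hε : 0 ≤ ε)
    (hb : ∀ y ∈ segment ℝ x (x - δ • ∇ f x), ‖∇ f y - ∇ f x‖ ≤ ε) :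
    f (x - δ • ∇ f x) - f x ≤ -(δ * ‖∇ f x‖ ^ 2) + δ * ε * ‖∇ f x‖ := by
  set g := ∇ f x with hg
  set D := (InnerProductSpace.toDual ℝ E) g with hD
  have hdiff : Differentiable ℝ f := hf.differentiable one_ne_zero
  set h : E → ℝ := fun y => f y - D y with hh
  have key : ‖h (x - δ • g) - h x‖ ≤ ε * ‖(x - δ • g) - x‖ := by
    apply (convex_segment x (x - δ • g)).norm_image_sub_le_of_norm_hasFDerivWithin_le
      (f' := fun y => fderiv ℝ f y - D) (fun y hy => ?_) (fun y hy => ?_)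
      (left_mem_segment ℝ _ _) (right_mem_segment ℝ _ _)
    · exact (((hdiff y).hasFDerivAt).sub (D.hasFDerivAt)).hasFDerivWithinAt
    · have : fderiv ℝ f y - D = (InnerProductSpace.toDual ℝ E) (∇ f y - g) := by
        rw [map_sub, hD]
        congr 1
        rw [gradient, LinearIsometryEquiv.apply_symm_apply]
      show ‖fderiv ℝ f y - D‖ ≤ ε
      rw [this, LinearIsometryEquiv.norm_map]
      exact hb y hy
  have hDx : D (x - δ • g) - D x = -(δ * ‖g‖ ^ 2) := by
    rw [map_sub, map_smul, hD]
    simp only [smul_eq_mul, toDual_apply_apply, real_inner_self_eq_norm_sq]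
    ring
  have h2 : h (x - δ • g) - h x = f (x - δ • g) - f x + δ * ‖g‖ ^ 2 := by
    simp only [hh]
    rw [show f (x - δ • g) - D (x - δ • g) - (f x - D x)
        = f (x - δ • g) - f x - (D (x - δ • g) - D x) by ring, hDx]
    ring
  have h3 : ‖(x - δ • g) - x‖ = δ * ‖g‖ := by
    rw [sub_sub_cancel_left, norm_neg, norm_smul, Real.norm_of_nonneg hδ]
  rw [h3] at key
  have h4 : f (x - δ • g) - f x + δ * ‖g‖ ^ 2 ≤ ε * (δ * ‖g‖) := by
    calc f (x - δ • g) - f x + δ * ‖g‖ ^ 2 = h (x - δ • g) - h x := h2.symm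
    _ ≤ |h (x - δ • g) - h x| := le_abs_self _
    _ ≤ ε * (δ * ‖g‖) := by rwa [Real.norm_eq_abs] at key
  linarith

theorem armijo_nbhd {f : E → ℝ} (hf : ContDiff ℝ 1 f) {α : ℝ} (hα0 : 0 < α) (hα1 : α < 1)
    {p : E} (hp : ∇ f p ≠ 0) :
    ∃ ρ > 0, ∃ δ' > 0, (∀ x ∈ ball p ρ, ‖∇ f x‖ ≥ 3 * ‖∇ f p‖ / 4) ∧
      ∀ x ∈ ball p ρ, ∀ δ : ℝ, 0 ≤ δ → δ ≤ δ' → ArmijoCondition f α δ x := by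
  set η := ‖∇ f p‖ with hη
  have hη0 : 0 < η := norm_pos_iff.mpr hp
  set ε' := min (η / 4) ((1 - α) * η / 8) with hε'
  have hε'0 : 0 < ε' := lt_min (by positivity) (by nlinarith)
  -- continuity of gradient at p
  have hcont : Continuous (∇ f) := gradient_continuous hf
  obtain ⟨ρ₀, hρ₀, hball⟩ : ∃ ρ₀ > 0, ∀ y ∈ ball p ρ₀, ‖∇ f y - ∇ f p‖ < ε' := by
    obtain ⟨ρ₀, h1, h2⟩ := Metric.continuous_iff.mp hcont p ε' hε'0
    exact ⟨ρ₀, h1, fun y hy => by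
      have := h2 y (mem_ball.mp hy)
      rwa [dist_eq_norm] at this⟩
  refine ⟨ρ₀ / 2, by positivity, ρ₀ / (4 * η), by positivity, ?_, ?_⟩
  · intro x hx
    have hx0 : ‖∇ f x - ∇ f p‖ < ε' := hball x (mem_ball.mpr ((mem_ball.mp hx).trans (by linarith)))
    have h1 : ‖∇ f x‖ ≥ η - ε' := by
      have := norm_sub_norm_le (∇ f x) (∇ f p)
      have h2 := abs_norm_sub_norm_le (∇ f x) (∇ f p)
      linarith [(abs_le.mp h2).1]
    have : ε' ≤ η / 4 := min_le_left _ _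
    linarith
  intro x hx δ hδ0 hδ'
  have hx' : x ∈ ball p ρ₀ := mem_ball.mpr ((mem_ball.mp hx).trans (by linarith))
  have hgx : ‖∇ f x - ∇ f p‖ < ε' := hball x hx'
  have hgxn : ‖∇ f x‖ ≤ η + ε' := by
    have := norm_sub_norm_le (∇ f x) (∇ f p)
    linarith
  have hgxl : ‖∇ f x‖ ≥ 3 * η / 4 := by
    have h2 := abs_norm_sub_norm_le (∇ f x) (∇ f p)
    have : ε' ≤ η / 4 := min_le_left _ _
    linarith [(abs_le.mp h2).1]
  -- points on segment are in ball p ρ₀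
  have hseg : ∀ y ∈ segment ℝ x (x - δ • ∇ f x), ‖∇ f y - ∇ f x‖ ≤ 2 * ε' := by
    intro y hy
    rw [segment_eq_image'] at hy
    obtain ⟨t, ht, rfl⟩ := hy
    have hyball : x + t • (x - δ • ∇ f x - x) ∈ ball p ρ₀ := by
      rw [mem_ball]
      have : x + t • (x - δ • ∇ f x - x) = x - (t * δ) • ∇ f x := by
        rw [sub_sub_cancel_left, smul_neg, smul_smul]
        abel
      rw [this]
      have hdist : dist (x - (t * δ) • ∇ f x) p ≤ dist x p + (t * δ) * ‖∇ f x‖ := by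
        calc dist (x - (t * δ) • ∇ f x) p ≤ dist (x - (t * δ) • ∇ f x) x + dist x p :=
              dist_triangle _ _ _
          _ = ‖(t * δ) • ∇ f x‖ + dist x p := by
              rw [dist_eq_norm, sub_sub_cancel_left, norm_neg]
          _ = (t * δ) * ‖∇ f x‖ + dist x p := by
              rw [norm_smul, Real.norm_of_nonneg (by nlinarith [ht.1, ht.2])]
          _ = dist x p + (t * δ) * ‖∇ f x‖ := by ring
      have htδ : t * δ ≤ δ := by nlinarith [ht.1, ht.2]
      have hbd : (t * δ) * ‖∇ f x‖ ≤ (ρ₀ / (4 * η)) * (η + ε') := by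
        apply mul_le_mul (htδ.trans hδ') hgxn (norm_nonneg _)
        positivity
      have hbd2 : (ρ₀ / (4 * η)) * (η + ε') ≤ ρ₀ / 2 := by
        have : ε' ≤ η / 4 := min_le_left _ _
        rw [div_mul_eq_mul_div, div_le_div_iff₀ (by positivity) (by norm_num)]
        nlinarith
      have := mem_ball.mp hx
      linarith
    have h1 := hball _ hyball
    have h2 : ‖∇ f (x + t • (x - δ • ∇ f x - x)) - ∇ f x‖
        ≤ ‖∇ f (x + t • (x - δ • ∇ f x - x)) - ∇ f p‖ + ‖∇ f p - ∇ f x‖ := by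
      have := dist_triangle (∇ f (x + t • (x - δ • ∇ f x - x))) (∇ f p) (∇ f x)
      simpa [dist_eq_norm] using this
    rw [← norm_neg (∇ f p - ∇ f x), neg_sub] at h2
    linarith
  have key := mvt_bound hf x hδ0 (by positivity) hseg
  rw [ArmijoCondition]
  have h2ε : 2 * ε' ≤ (1 - α) * ‖∇ f x‖ := by
    have h1 : ε' ≤ (1 - α) * η / 8 := min_le_right _ _
    nlinarith
  nlinarith [norm_nonneg (∇ f x), hδ0,
    mul_le_mul_of_nonneg_left h2ε (mul_nonneg hδ0 (norm_nonneg (∇ f x)))]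

end Helpers

section MetricHelpers

variable {E : Type*} [MetricSpace E]

theorem frequently_band (x : ℕ → E)
    (hstep : Tendsto (fun n => dist (x (n + 1)) (x n)) atTop (nhds 0))
    (φ : E → ℝ) (hφ : ∀ y z, φ y - φ z ≤ dist y z) {a b : ℝ} (hab : a < b)
    (h1 : ∃ᶠ n in atTop, φ (x n) < a) (h2 : ∃ᶠ n in atTop, b ≤ φ (x n)) :
    ∃ᶠ n in atTop, φ (x n) ∈ Set.Icc a b := by
  rw [frequently_atTop] at h1 h2 ⊢
  intro N
  obtain ⟨N₁, hN₁⟩ : ∃ N₁, ∀ n ≥ N₁, dist (x (n + 1)) (x n) < b - a := by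
    have := (hstep.eventually (eventually_lt_nhds (by linarith : (0:ℝ) < b - a)))
    rw [eventually_atTop] at this
    obtain ⟨N₁, h⟩ := this
    exact ⟨N₁, h⟩
  obtain ⟨n₀, hn₀N, hn₀⟩ := h1 (max N N₁)
  obtain ⟨n₁, hn₁N, hn₁⟩ := h2 (n₀ + 1)
  have hex : ∃ k, a ≤ φ (x (n₀ + k)) := by
    refine ⟨n₁ - n₀, ?_⟩
    rw [Nat.add_sub_cancel' (by omega : n₀ ≤ n₁)]
    linarith
  classical
  obtain ⟨k, hkspec, hkmin⟩ : ∃ k, a ≤ φ (x (n₀ + k)) ∧ ∀ i < k, ¬ a ≤ φ (x (n₀ + i)) :=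
    ⟨Nat.find hex, Nat.find_spec hex, fun i hi => Nat.find_min hex hi⟩
  have hk0 : k ≠ 0 := by
    intro h
    rw [h] at hkspec
    simp at hkspec
    linarith
  obtain ⟨k', rfl⟩ : ∃ k', k = k' + 1 := ⟨k - 1, by omega⟩
  have hprev : φ (x (n₀ + k')) < a := by
    have := hkmin k' (by omega)
    linarith
  refine ⟨n₀ + (k' + 1), by omega, hkspec, ?_⟩
  have hd := hN₁ (n₀ + k') (by omega)
  have := hφ (x (n₀ + k' + 1)) (x (n₀ + k'))
  have heq : n₀ + (k' + 1) = n₀ + k' + 1 := by omega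
  rw [heq]
  linarith

theorem cluster_of_frequently_mem {x : ℕ → E} {K : Set E} (hK : IsCompact K)
    (h : ∃ᶠ n in atTop, x n ∈ K) : ∃ p ∈ K, MapClusterPt p atTop x := by
  obtain ⟨p, hpK, φ, hφ, hlim⟩ := hK.tendsto_subseq' h
  exact ⟨p, hpK, MapClusterPt.of_comp hφ.tendsto_atTop hlim.mapClusterPt⟩

theorem exists_isClopen_subset' {X : Type*} [TopologicalSpace X] [T2Space X] [CompactSpace X]
    {x : X} {U : Set X} (hU : IsOpen U) (h : connectedComponent x ⊆ U) :
    ∃ V : Set X, IsClopen V ∧ x ∈ V ∧ V ⊆ U := by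
  rw [connectedComponent_eq_iInter_isClopen] at h
  have H1 := hU.isClosed_compl.isCompact.inter_iInter_nonempty
    (fun s : { s : Set X // IsClopen s ∧ x ∈ s } => s.1) (fun s => s.2.1.1)
  rw [← not_disjoint_iff_nonempty_inter, imp_not_comm, not_forall] at H1
  obtain ⟨si, H2⟩ := H1 (disjoint_compl_left_iff_subset.2 h)
  refine ⟨⋂ U ∈ si, (U : Set X), isClopen_biInter_finset (fun s _ => s.2.1),
    mem_iInter₂.2 fun s _ => s.2.2, ?_⟩
  rwa [← disjoint_compl_left_iff_subset, disjoint_iff_inter_eq_empty,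
    ← not_nonempty_iff_eq_empty]

end MetricHelpers


/-- Let `f : ℝ^m → ℝ` be `C¹`, `α, β ∈ (0,1)`, `δ₀ > 0`, and `(x n)` the
backtracking gradient descent sequence from an arbitrary initial point. Let `A` be the set of
critical points of `f`, `C` the set of cluster points of `(x n)`, and `B` a compact connected
component of `A` with `C ∩ B ≠ ∅`. Then `C ⊆ B` and `C` is connected; in particular if
`B = {p}` then the whole sequence converges to `p`. -/
theorem backtracking_GD_cluster_set_in_compact_component
    {m : ℕ} (f : EuclideanSpace ℝ (Fin m) → ℝ) (hf : ContDiff ℝ 1 f)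
    (α β δ₀ : ℝ) (hα0 : 0 < α) (hα1 : α < 1) (hβ0 : 0 < β) (hβ1 : β < 1) (hδ₀ : 0 < δ₀)
    (δsel : EuclideanSpace ℝ (Fin m) → ℝ) (hδsel : IsBacktrackingRate f α β δ₀ δsel)
    (x : ℕ → EuclideanSpace ℝ (Fin m))
    (hupd : ∀ n, x (n + 1) = x n - δsel (x n) • ∇ f (x n))
    (A : Set (EuclideanSpace ℝ (Fin m))) (hA : A = {y | ∇ f y = 0})
    (C : Set (EuclideanSpace ℝ (Fin m)))
    (hC : C = {p | MapClusterPt p Filter.atTop x})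
    (B : Set (EuclideanSpace ℝ (Fin m))) (b : EuclideanSpace ℝ (Fin m)) (hb : b ∈ A)
    (hB : B = connectedComponentIn A b) (hBcompact : IsCompact B)
    (hCB : (C ∩ B).Nonempty) :
    C ⊆ B ∧ IsConnected C ∧
      (∀ p, B = {p} → Filter.Tendsto x Filter.atTop (nhds p)) := by
  obtain ⟨q, hqC, hqB⟩ := hCB
  have hgc : Continuous (∇ f) := gradient_continuous hf
  have hAclosed : IsClosed A := by
    rw [hA]
    exact isClosed_eq hgc continuous_const
  -- basic step size facts
  have hδpos : ∀ y, 0 < δsel y := fun y => by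
    obtain ⟨j, hj, -, -⟩ := hδsel y
    rw [hj]; positivity
  have hδle : ∀ y, δsel y ≤ δ₀ := fun y => by
    obtain ⟨j, hj, -, -⟩ := hδsel y
    rw [hj]
    calc β ^ j * δ₀ ≤ 1 * δ₀ := by
          apply mul_le_mul_of_nonneg_right _ hδ₀.le
          exact pow_le_one₀ hβ0.le hβ1.le
      _ = δ₀ := one_mul _
  have harmijo : ∀ y, f (y - δsel y • ∇ f y) - f y ≤ -(α * δsel y * ‖∇ f y‖ ^ 2) := fun y =>
    (hδsel y).choose_spec.2.1
  have hdec : ∀ n, f (x (n + 1)) ≤ f (x n) - α * δsel (x n) * ‖∇ f (x n)‖ ^ 2 := by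
    intro n
    have := harmijo (x n)
    rw [← hupd n] at this
    linarith
  have hmono : Antitone fun n => f (x n) := by
    apply antitone_nat_of_succ_le
    intro n
    have h1 := hdec n
    have h2 : 0 ≤ α * δsel (x n) * ‖∇ f (x n)‖ ^ 2 :=
      mul_nonneg (mul_nonneg hα0.le (hδpos _).le) (sq_nonneg _)
    linarith
  -- f (x n) is bounded below by f q
  have hlb : ∀ n, f q ≤ f (x n) := by
    intro n
    by_contra hcon
    push_neg at hcon
    have hs : {y | (f (x n) + f q) / 2 < f y} ∈ nhds q := by
      apply (isOpen_lt continuous_const (hf.continuous)).mem_nhds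
      simp only [Set.mem_setOf_eq]
      linarith
    have hfreq := (mapClusterPt_iff_frequently.mp (by rw [hC] at hqC; exact hqC) _ hs)
    rw [frequently_atTop] at hfreq
    obtain ⟨k, hk, hk2⟩ := hfreq (n + 1)
    have : f (x k) ≤ f (x n) := hmono (by omega)
    simp only [Set.mem_setOf_eq] at hk2
    linarith
  -- f (x n) converges
  have hfconv : Tendsto (fun n => f (x n)) atTop (nhds (⨅ n, f (x n))) := by
    apply tendsto_atTop_ciInf hmono
    exact ⟨f q, by rintro y ⟨n, rfl⟩; exact hlb n⟩
  have hdiff0 : Tendsto (fun n => f (x n) - f (x (n + 1))) atTop (nhds 0) := by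
    have h2 : Tendsto (fun n => f (x (n + 1))) atTop (nhds (⨅ n, f (x n))) :=
      hfconv.comp (tendsto_add_atTop_nat 1)
    simpa using hfconv.sub h2
  have hstepsq : Tendsto (fun n => α * δsel (x n) * ‖∇ f (x n)‖ ^ 2) atTop (nhds 0) := by
    apply squeeze_zero
      (fun n => mul_nonneg (mul_nonneg hα0.le (hδpos _).le) (sq_nonneg _)) (fun n => ?_) hdiff0
    have := hdec n
    linarith
  -- steps tend to zero
  have hstep : Tendsto (fun n => dist (x (n + 1)) (x n)) atTop (nhds 0) := by
    have hdist : ∀ n, dist (x (n + 1)) (x n) = δsel (x n) * ‖∇ f (x n)‖ := by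
      intro n
      rw [dist_eq_norm, hupd n, sub_sub_cancel_left, norm_neg, norm_smul,
        Real.norm_of_nonneg (hδpos (x n)).le]
    have hsq : Tendsto (fun n => dist (x (n + 1)) (x n) ^ 2) atTop (nhds 0) := by
      have htend : Tendsto (fun n => (δ₀ / α) * (α * δsel (x n) * ‖∇ f (x n)‖ ^ 2))
          atTop (nhds 0) := by
        simpa using hstepsq.const_mul (δ₀ / α)
      apply squeeze_zero (fun n => by positivity) (fun n => ?_) htend
      rw [hdist n, mul_pow]
      have h2 : δsel (x n) ≤ δ₀ := hδle (x n)
      have h3 : 0 < δsel (x n) := hδpos (x n)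
      have heq : (δ₀ / α) * (α * δsel (x n) * ‖∇ f (x n)‖ ^ 2)
          = δ₀ * δsel (x n) * ‖∇ f (x n)‖ ^ 2 := by
        field_simp
      rw [heq]
      nlinarith [norm_nonneg (∇ f (x n)), sq_nonneg (‖∇ f (x n)‖),
        mul_le_mul_of_nonneg_right h2 (mul_nonneg h3.le (sq_nonneg ‖∇ f (x n)‖))]
    have := (Real.continuous_sqrt.tendsto 0).comp hsq
    simp only [Real.sqrt_zero] at this
    apply this.congr
    intro n
    simp only [Function.comp_apply]
    exact Real.sqrt_sq dist_nonneg
  -- every cluster point is critical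
  have hcrit : ∀ p, MapClusterPt p atTop x → ∇ f p = 0 := by
    intro p hp
    by_contra hp0
    obtain ⟨ρ, hρ, δ', hδ', hlow, harm⟩ := armijo_nbhd hf hα0 hα1 hp0
    -- step size lower bound on the ball
    have hsel : ∀ y ∈ ball p ρ, min δ₀ (β * δ') ≤ δsel y := by
      intro y hy
      obtain ⟨j, hj, -, hmin⟩ := hδsel y
      match j, hj, hmin with
      | 0, hj, hmin => rw [hj, pow_zero, one_mul]; exact min_le_left _ _
      | (i+1), hj, hmin =>
        have hnot := hmin i (by omega)
        have hgt : δ' < β ^ i * δ₀ := by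
          by_contra hle
          push_neg at hle
          exact hnot (harm y hy _ (by positivity) hle)
        rw [hj]
        calc min δ₀ (β * δ') ≤ β * δ' := min_le_right _ _
          _ ≤ β * (β ^ i * δ₀) := by nlinarith
          _ = β ^ (i + 1) * δ₀ := by ring
    set c := α * min δ₀ (β * δ') * (3 * ‖∇ f p‖ / 4) ^ 2 with hc
    have hc0 : 0 < c := by
      have : 0 < ‖∇ f p‖ := norm_pos_iff.mpr hp0
      have h1 : 0 < min δ₀ (β * δ') := lt_min hδ₀ (by positivity)
      positivity
    have hev : ∀ᶠ n in atTop, α * δsel (x n) * ‖∇ f (x n)‖ ^ 2 < c :=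
      hstepsq.eventually (eventually_lt_nhds hc0)
    have hfreq : ∃ᶠ n in atTop, x n ∈ ball p ρ :=
      mapClusterPt_iff_frequently.mp hp _ (ball_mem_nhds p hρ)
    obtain ⟨n, hn1, hn2⟩ := (hfreq.and_eventually hev).exists
    have h1 := hsel (x n) hn1
    have h2 := hlow (x n) hn1
    have h3 : c ≤ α * δsel (x n) * ‖∇ f (x n)‖ ^ 2 := by
      rw [hc]
      have h4 : (3 * ‖∇ f p‖ / 4) ^ 2 ≤ ‖∇ f (x n)‖ ^ 2 := by
        apply sq_le_sq' _ h2
        have := norm_nonneg (∇ f p)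
        have := norm_nonneg (∇ f (x n))
        linarith
      have h6 := hδpos (x n)
      have e1 := mul_le_mul_of_nonneg_right (mul_le_mul_of_nonneg_left h1 hα0.le)
        (sq_nonneg (3 * ‖∇ f p‖ / 4))
      have e2 := mul_le_mul_of_nonneg_left h4 (mul_nonneg hα0.le h6.le)
      linarith
    linarith
  have hCA : C ⊆ A := by
    intro p hp
    rw [hC] at hp
    rw [hA]
    exact hcrit p hp
  -- ### Topological setup
  set K := Metric.cthickening 1 B with hK
  have hKcomp : IsCompact K := hBcompact.cthickening
  have hA'comp : IsCompact (A ∩ K) := hKcomp.inter_left hAclosed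
  have hbB : b ∈ B := hB ▸ mem_connectedComponentIn hb
  have hBA : B ⊆ A := hB ▸ connectedComponentIn_subset A b
  have hBA' : B ⊆ A ∩ K := fun y hy =>
    ⟨hBA hy, thickening_subset_cthickening 1 B (self_subset_thickening one_pos B hy)⟩
  have hbA' : b ∈ A ∩ K := hBA' hbB
  haveI : CompactSpace ↥(A ∩ K) := isCompact_iff_compactSpace.mp hA'comp
  have hBconn : IsPreconnected B := hB ▸ isPreconnected_connectedComponentIn
  have hBcc : B = connectedComponentIn (A ∩ K) b := by
    apply Subset.antisymm
    · exact hBconn.subset_connectedComponentIn hbB hBA'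
    · rw [hB]
      exact connectedComponentIn_mono b (inter_subset_left)
  -- find a clopen (in A ∩ K) neighborhood of B inside the 1/4-thickening of B
  have hUopen : IsOpen ((Subtype.val) ⁻¹' (thickening (1/4 : ℝ) B) : Set ↥(A ∩ K)) :=
    isOpen_thickening.preimage continuous_subtype_val
  have hcc : connectedComponent (⟨b, hbA'⟩ : ↥(A ∩ K))
      ⊆ Subtype.val ⁻¹' (thickening (1/4 : ℝ) B) := by
    intro z hz
    have h1 : (z : EuclideanSpace ℝ (Fin m)) ∈ connectedComponentIn (A ∩ K) b := by
      rw [connectedComponentIn_eq_image hbA']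
      exact ⟨z, hz, rfl⟩
    rw [← hBcc] at h1
    exact self_subset_thickening (by norm_num) B h1
  obtain ⟨V', hV'clopen, hbV', hV'sub⟩ := exists_isClopen_subset' hUopen hcc
  set V := (Subtype.val '' V' : Set (EuclideanSpace ℝ (Fin m))) with hV
  have hVA' : V ⊆ A ∩ K := by rintro y ⟨z, -, rfl⟩; exact z.2
  have hVcomp : IsCompact V := (hV'clopen.isClosed.isCompact).image continuous_subtype_val
  have hBV : B ⊆ V := by
    intro y hy
    have h1 : y ∈ connectedComponentIn (A ∩ K) b := hBcc ▸ hy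
    rw [connectedComponentIn_eq_image hbA'] at h1
    obtain ⟨z, hz, rfl⟩ := h1
    exact ⟨z, (hV'clopen.connectedComponent_subset hbV') hz, rfl⟩
  have hVthick : V ⊆ thickening (1/4 : ℝ) B := by rintro y ⟨z, hz, rfl⟩; exact hV'sub hz
  have hVne : V.Nonempty := ⟨b, hBV hbB⟩
  have hWcomp : IsCompact ((A ∩ K) \ V) := by
    have heq : (A ∩ K) \ V = Subtype.val '' ((V')ᶜ : Set ↥(A ∩ K)) := by
      ext y
      constructor
      · rintro ⟨hyA', hyV⟩
        exact ⟨⟨y, hyA'⟩, fun hmem => hyV ⟨⟨y, hyA'⟩, hmem, rfl⟩, rfl⟩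
      · rintro ⟨z, hz, rfl⟩
        refine ⟨z.2, ?_⟩
        rintro ⟨w, hw, hwz⟩
        exact hz (by rwa [show w = z from Subtype.ext hwz] at hw)
    rw [heq]
    exact (hV'clopen.compl.isClosed.isCompact).image continuous_subtype_val
  have hdisjVW : Disjoint V ((A ∩ K) \ V) := disjoint_sdiff_self_right
  obtain ⟨δ₁, hδ₁, hdisjcth⟩ := hdisjVW.exists_cthickenings hVcomp hWcomp.isClosed
  set r := min (δ₁ / 2) (1 / 2 : ℝ) with hr
  have hr0 : 0 < r := lt_min (by linarith) (by norm_num)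
  -- key separation property: critical points close to V are in V
  have hkey : ∀ y ∈ A, infDist y V ≤ r → y ∈ V := by
    intro y hyA hyd
    by_cases hyK : y ∈ K
    · by_contra hyV
      have hyW : y ∈ (A ∩ K) \ V := ⟨⟨hyA, hyK⟩, hyV⟩
      have h2 : infDist y V < δ₁ := lt_of_le_of_lt hyd
        (lt_of_le_of_lt (min_le_left _ _) (by linarith))
      obtain ⟨v, hv, hdv⟩ := (infDist_lt_iff hVne).mp h2
      have h1 : y ∈ cthickening δ₁ V := mem_cthickening_of_dist_le y v δ₁ V hv hdv.le
      exact (Set.disjoint_left.mp hdisjcth h1) (self_subset_cthickening _ hyW)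
    · exfalso
      have h2 : infDist y V < 3/4 := lt_of_le_of_lt hyd
        (lt_of_le_of_lt (min_le_right _ _) (by norm_num))
      obtain ⟨v, hv, hdv⟩ := (infDist_lt_iff hVne).mp h2
      obtain ⟨b', hb', hdb⟩ := mem_thickening_iff.mp (hVthick hv)
      have h3 : y ∈ thickening 1 B := by
        rw [mem_thickening_iff]
        refine ⟨b', hb', ?_⟩
        calc dist y b' ≤ dist y v + dist v b' := dist_triangle _ _ _
          _ < 1 := by linarith
      exact hyK (thickening_subset_cthickening 1 B h3)
  -- the trapping region
  set T := {y : EuclideanSpace ℝ (Fin m) | infDist y V ≤ r / 2} with hT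
  have hTclosed : IsClosed T := isClosed_le (continuous_infDist_pt V) continuous_const
  have hTcomp : IsCompact T := by
    apply (hVcomp.cthickening (r := r)).of_isClosed_subset hTclosed
    intro y hy
    have h1 : infDist y V < r := lt_of_le_of_lt hy (by linarith)
    obtain ⟨v, hv, hdv⟩ := (infDist_lt_iff hVne).mp h1
    exact mem_cthickening_of_dist_le y v r V hv hdv.le
  have hφlip : ∀ (s : Set (EuclideanSpace ℝ (Fin m))) (y z : EuclideanSpace ℝ (Fin m)),
      infDist y s - infDist z s ≤ dist y z := by
    intro s y z
    have := infDist_le_infDist_add_dist (x := y) (y := z) (s := s)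
    linarith
  have hqV : q ∈ V := hBV hqB
  have hqcl : MapClusterPt q atTop x := by rw [hC] at hqC; exact hqC
  -- the sequence is eventually trapped in T
  have htrap : ∀ᶠ n in atTop, x n ∈ T := by
    by_contra hcon
    rw [not_eventually] at hcon
    have h2 : ∃ᶠ n in atTop, r/2 ≤ infDist (x n) V := by
      apply hcon.mono
      intro n hn
      rw [hT, Set.mem_setOf_eq, not_le] at hn
      exact hn.le
    have h1 : ∃ᶠ n in atTop, infDist (x n) V < r/4 := by
      have hb' : ball q (r/4) ∈ nhds q := ball_mem_nhds q (by linarith)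
      apply (mapClusterPt_iff_frequently.mp hqcl _ hb').mono
      intro n hn
      exact lt_of_le_of_lt (infDist_le_dist_of_mem hqV) (mem_ball.mp hn)
    have hband := frequently_band x hstep (fun y => infDist y V) (hφlip V)
      (show r/4 < r/2 by linarith) h1 h2
    have hfreqS : ∃ᶠ n in atTop, x n ∈ T ∩ {y | r/4 ≤ infDist y V} :=
      hband.mono (fun n hn => ⟨hn.2, hn.1⟩)
    obtain ⟨z, hzS, hzcl⟩ := cluster_of_frequently_mem
      (hTcomp.inter_right (isClosed_le continuous_const (continuous_infDist_pt V))) hfreqS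
    have hzA : z ∈ A := by rw [hA]; exact hcrit z hzcl
    have hzV : z ∈ V := hkey z hzA (le_trans hzS.1 (by linarith))
    have h0 : infDist z V = 0 := infDist_zero_of_mem hzV
    have h4 : r/4 ≤ infDist z V := hzS.2
    linarith
  have hCT : C ⊆ T := by
    intro p hp
    rw [hC] at hp
    have h1 : p ∈ closure T := by
      rw [mem_closure_iff_nhds]
      intro s hs
      obtain ⟨n, hn1, hn2⟩ := ((mapClusterPt_iff_frequently.mp hp s hs).and_eventually htrap).exists
      exact ⟨x n, hn1, hn2⟩
    rwa [hTclosed.closure_eq] at h1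
  have hCclosed : IsClosed C := by
    rw [hC]
    exact isClosed_setOf_clusterPt
  have hCcomp : IsCompact C := hTcomp.of_isClosed_subset hCclosed hCT
  -- distance to the cluster set tends to zero
  have hdistC : Tendsto (fun n => infDist (x n) C) atTop (nhds 0) := by
    by_contra hcon
    rw [Metric.tendsto_atTop] at hcon
    push_neg at hcon
    obtain ⟨ε, hε, hcon⟩ := hcon
    have hfreq : ∃ᶠ n in atTop, x n ∈ T ∩ {y | ε ≤ infDist y C} := by
      rw [frequently_atTop]
      intro N
      obtain ⟨N', hNN'⟩ := eventually_atTop.mp htrap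
      obtain ⟨n, hn, hn2⟩ := hcon (max N N')
      rw [Real.dist_eq, sub_zero, abs_of_nonneg infDist_nonneg] at hn2
      exact ⟨n, le_trans (le_max_left _ _) hn, hNN' n (le_trans (le_max_right _ _) hn), hn2⟩
    obtain ⟨z, hzS, hzcl⟩ := cluster_of_frequently_mem
      (hTcomp.inter_right (isClosed_le continuous_const (continuous_infDist_pt C))) hfreq
    have hzC : z ∈ C := by rw [hC]; exact hzcl
    have h0 : infDist z C = 0 := infDist_zero_of_mem hzC
    have h4 : ε ≤ infDist z C := hzS.2
    linarith
  -- C is preconnected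
  have hCne : C.Nonempty := ⟨q, hqC⟩
  have hCpre : IsPreconnected C := by
    rintro u v hu hv hCuv ⟨p₁, hp₁C, hp₁u⟩ ⟨p₂, hp₂C, hp₂v⟩
    by_contra hne
    rw [Set.not_nonempty_iff_eq_empty] at hne
    set C₁ := C ∩ vᶜ with hC₁
    set C₂ := C ∩ uᶜ with hC₂
    have hC₁closed : IsClosed C₁ := hCclosed.inter hv.isClosed_compl
    have hC₂closed : IsClosed C₂ := hCclosed.inter hu.isClosed_compl
    have hC₁comp : IsCompact C₁ :=
      hCcomp.of_isClosed_subset hC₁closed inter_subset_left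
    have hp₁C₁ : p₁ ∈ C₁ := by
      refine ⟨hp₁C, fun hp₁v => ?_⟩
      have h5 : p₁ ∈ C ∩ (u ∩ v) := ⟨hp₁C, hp₁u, hp₁v⟩
      rw [hne] at h5
      exact h5
    have hp₂C₂ : p₂ ∈ C₂ := by
      refine ⟨hp₂C, fun hp₂u => ?_⟩
      have h5 : p₂ ∈ C ∩ (u ∩ v) := ⟨hp₂C, hp₂u, hp₂v⟩
      rw [hne] at h5
      exact h5
    have hdisj12 : Disjoint C₁ C₂ := by
      rw [Set.disjoint_left]
      rintro z ⟨hzC, hzv⟩ ⟨-, hzu⟩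
      rcases hCuv hzC with h | h
      · exact hzu h
      · exact hzv h
    have hunion : C = C₁ ∪ C₂ := by
      ext z
      constructor
      · intro hz
        rcases hCuv hz with h | h
        · left
          refine ⟨hz, fun hzv => ?_⟩
          have h5 : z ∈ C ∩ (u ∩ v) := ⟨hz, h, hzv⟩
          rw [hne] at h5
          exact h5
        · right
          refine ⟨hz, fun hzu => ?_⟩
          have h5 : z ∈ C ∩ (u ∩ v) := ⟨hz, hzu, h⟩
          rw [hne] at h5
          exact h5
      · rintro (⟨h, -⟩ | ⟨h, -⟩) <;> exact h
    obtain ⟨e, he, hecth⟩ := hdisj12.exists_cthickenings hC₁comp hC₂closed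
    have hsep : ∀ z ∈ C₂, e ≤ infDist z C₁ := by
      intro z hz
      by_contra hlt
      push_neg at hlt
      obtain ⟨w, hw, hdw⟩ := (infDist_lt_iff ⟨p₁, hp₁C₁⟩).mp hlt
      exact Set.disjoint_left.mp hecth (mem_cthickening_of_dist_le z w e _ hw hdw.le)
        (self_subset_cthickening _ hz)
    have hcl₁ : MapClusterPt p₁ atTop x := by rw [hC] at hp₁C; exact hp₁C
    have hcl₂ : MapClusterPt p₂ atTop x := by rw [hC] at hp₂C; exact hp₂C
    have h1 : ∃ᶠ n in atTop, infDist (x n) C₁ < e/4 := by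
      apply (mapClusterPt_iff_frequently.mp hcl₁ _ (ball_mem_nhds p₁ (by linarith : (0:ℝ) < e/4))).mono
      intro n hn
      exact lt_of_le_of_lt (infDist_le_dist_of_mem hp₁C₁) (mem_ball.mp hn)
    have h2 : ∃ᶠ n in atTop, e/2 ≤ infDist (x n) C₁ := by
      apply (mapClusterPt_iff_frequently.mp hcl₂ _ (ball_mem_nhds p₂ (by linarith : (0:ℝ) < e/4))).mono
      intro n hn
      have h3 := hφlip C₁ p₂ (x n)
      have h4 : dist p₂ (x n) < e/4 := by rw [dist_comm]; exact mem_ball.mp hn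
      have h5 := hsep p₂ hp₂C₂
      linarith
    have hband := frequently_band x hstep (fun y => infDist y C₁) (hφlip C₁)
      (show e/4 < e/2 by linarith) h1 h2
    have hfreqS : ∃ᶠ n in atTop, x n ∈ T ∩ {y | infDist y C₁ ∈ Set.Icc (e/4) (e/2)} := by
      rw [frequently_atTop]
      intro N
      obtain ⟨N', hNN'⟩ := eventually_atTop.mp htrap
      obtain ⟨n, hn, hn2⟩ := frequently_atTop.mp hband (max N N')
      exact ⟨n, le_trans (le_max_left _ _) hn, hNN' n (le_trans (le_max_right _ _) hn), hn2⟩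
    have hSclosed : IsClosed {y : EuclideanSpace ℝ (Fin m) | infDist y C₁ ∈ Set.Icc (e/4) (e/2)} :=
      IsClosed.preimage (continuous_infDist_pt C₁) isClosed_Icc
    obtain ⟨z, hzS, hzcl⟩ := cluster_of_frequently_mem (hTcomp.inter_right hSclosed) hfreqS
    have hzC : z ∈ C := by rw [hC]; exact hzcl
    rw [hunion] at hzC
    rcases hzC with hz | hz
    · have h0 : infDist z C₁ = 0 := infDist_zero_of_mem hz
      have h4 := hzS.2.1
      linarith
    · have h5 := hsep z hz
      have h4 := hzS.2.2
      linarith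
  -- conclusions
  have hCB2 : C ⊆ B := by
    have h1 : C ⊆ connectedComponentIn A q := hCpre.subset_connectedComponentIn hqC hCA
    have h2 : connectedComponentIn A b = connectedComponentIn A q := by
      apply connectedComponentIn_eq
      rw [← hB]
      exact hqB
    rw [hB, h2]
    exact h1
  refine ⟨hCB2, ⟨hCne, hCpre⟩, ?_⟩
  intro p hp
  have hqp : q = p := by
    have h1 : q ∈ ({p} : Set _) := hp ▸ hqB
    exact h1
  have hCp : C = {p} := by
    apply subset_antisymm (hp ▸ hCB2)
    rw [Set.singleton_subset_iff, ← hqp]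
    exact hqC
  rw [tendsto_iff_dist_tendsto_zero]
  apply hdistC.congr
  intro n
  rw [hCp, infDist_singleton]
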